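/- Let α be an expanding algebraic number (an algebraic number all of whose conjugates, including α itself, have modulus greater than 1), R a complete residue system mod α in ℤ[α], and J the associated backward division map. Then for every β ∈ ℤ[α], the sequence (J^{(n)}(β))_{n≥0} is eventually periodic. -/

import Mathlib

open Polynomial

/-- `ℤ[α]`: the set of values `P(α)` for `P ∈ ℤ[x]`. -/
def Zadj (α : ℂ) : Set ℂ := {z | ∃ P : ℤ[X], aeval α P = z}

/-- `F[α]`: the set of all sums `Σ_{j=0}^{n} f_j α^j` with `n ∈ ℕ` and `f_0, …, f_n ∈ F`. -/
def repSet (α : ℂ) (F : Set ℂ) : Set ℂ :=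
  {z | ∃ (n : ℕ) (f : ℕ → ℂ), (∀ j ≤ n, f j ∈ F) ∧
    z = ∑ j ∈ Finset.range (n + 1), f j * α ^ j}

/-- `R` is a complete residue system mod `α` in `ℤ[α]`: `R ⊆ ℤ[α]` and every `β ∈ ℤ[α]`
is congruent modulo the ideal `αℤ[α]` to exactly one element of `R`. -/
def IsCRS (α : ℂ) (R : Set ℂ) : Prop :=
  R ⊆ Zadj α ∧ ∀ β ∈ Zadj α, ∃! r, r ∈ R ∧ ∃ γ ∈ Zadj α, β - r = α * γ

/-- `J` is the backward division map associated to the CRS `R`: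
for every `β ∈ ℤ[α]`, `J β ∈ ℤ[α]` and `β = r + α · J β` for some `r ∈ R`. -/
def IsJmap (α : ℂ) (R : Set ℂ) (J : ℂ → ℂ) : Prop :=
  ∀ β ∈ Zadj α, J β ∈ Zadj α ∧ ∃ r ∈ R, β = r + α * J β

/-- `℘`: the set of periodic elements of `ℤ[α]` under `J`. -/
def perSet (α : ℂ) (J : ℂ → ℂ) : Set ℂ :=
  {β ∈ Zadj α | ∃ n : ℕ, 1 ≤ n ∧ J^[n] β = β}

/-- The orbit of `β` under `J` is eventually periodic. -/
def EvPeriodic (J : ℂ → ℂ) (β : ℂ) : Prop :=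
  ∃ (k m : ℕ), 1 ≤ m ∧ J^[k + m] β = J^[k] β

section Aux

open IsDedekindDomain NumberField

/-- An element of a number field whose valuation is at most one at every finite place
is an algebraic integer. -/
theorem EvPer.integral_of_val_le_one (K : Type*) [Field K] [NumberField K] (x : K)
    (h : ∀ v : HeightOneSpectrum (𝓞 K), v.valuation K x ≤ 1) : IsIntegral ℤ x := by
  classical
  obtain ⟨r, s, hs, rfl⟩ := IsFractionRing.div_surjective (A := 𝓞 K) x
  by_cases hr : r = 0
  · simp [hr, isIntegral_zero]
  have hs0 : s ≠ 0 := nonZeroDivisors.ne_zero hs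
  have hsK : algebraMap (𝓞 K) K s ≠ 0 := by simpa using hs0
  have hrspan : Ideal.span {r} ≠ 0 := by simpa [Ideal.span_singleton_eq_bot] using hr
  have hsspan : Ideal.span {s} ≠ 0 := by simpa [Ideal.span_singleton_eq_bot] using hs0
  have key : Ideal.span {s} ∣ Ideal.span {r} := by
    rw [← Associates.mk_le_mk_iff_dvd, ← Associates.factors_le,
      Associates.factors_mk _ (by simpa using hsspan),
      Associates.factors_mk _ (by simpa using hrspan), WithTop.coe_le_coe,
      Multiset.le_iff_count]
    intro p
    obtain ⟨I, hI⟩ := Associates.mk_surjective p.1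
    have hIirr : Irreducible I := by
      rw [← Associates.irreducible_mk, hI]; exact p.2
    have hIprime : Prime I := UniqueFactorizationMonoid.irreducible_iff_prime.mp hIirr
    set v : HeightOneSpectrum (𝓞 K) :=
      ⟨I, Ideal.isPrime_of_prime hIprime, hIprime.ne_zero⟩ with hv
    have h1 : v.intValuation r ≤ v.intValuation s := by
      have hmul : v.valuation K ((algebraMap (𝓞 K) K r) / (algebraMap (𝓞 K) K s))
          * v.intValuation s = v.intValuation r := by
        rw [← v.valuation_of_algebraMap (K := K) s, ← map_mul,
          div_mul_cancel₀ _ hsK, v.valuation_of_algebraMap]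
      rw [← hmul]
      calc v.valuation K ((algebraMap (𝓞 K) K r) / (algebraMap (𝓞 K) K s)) * v.intValuation s
          ≤ 1 * v.intValuation s := mul_le_mul_left (h v) _
        _ = v.intValuation s := one_mul _
    rw [HeightOneSpectrum.intValuation_apply, HeightOneSpectrum.intValuation_apply,
      v.intValuationDef_if_neg hr, v.intValuationDef_if_neg hs0, WithZero.exp_le_exp,
      neg_le_neg_iff, Int.ofNat_le] at h1
    have hcnt : ∀ J : Ideal (𝓞 K), J ≠ 0 →
        Multiset.count p (Associates.factors' J) =
          (Associates.mk v.asIdeal).count (Associates.mk J).factors := by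
      intro J hJ
      rw [Associates.factors_mk _ (by simpa using hJ), Associates.count_some]
      · congr 1
        ext
        simp [hv, hI]
      · rw [hv]; exact HeightOneSpectrum.associates_irreducible _
    rw [hcnt _ hsspan, hcnt _ hrspan]
    exact h1
  obtain ⟨t, ht⟩ : ∃ t, r = s * t := by
    obtain ⟨J, hJ⟩ := key
    have hmem0 : r ∈ Ideal.span {s} * J := hJ ▸ Ideal.mem_span_singleton_self r
    have hmem : r ∈ Ideal.span {s} := Ideal.mul_le_left hmem0
    obtain ⟨a, ha⟩ := Ideal.mem_span_singleton'.mp hmem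
    exact ⟨a, by rw [← ha, mul_comm]⟩
  rw [ht, map_mul, mul_comm, mul_div_assoc, div_self hsK, mul_one]
  exact NumberField.RingOfIntegers.isIntegral_coe t

end Aux

section ZadjLemmas

lemma EvPer.zadj_eq (α : ℂ) : Zadj α = ↑(Algebra.adjoin ℤ {α} : Subalgebra ℤ ℂ) := by
  rw [Algebra.adjoin_singleton_eq_range_aeval]
  ext z
  simp only [Zadj, Set.mem_setOf_eq, SetLike.mem_coe, AlgHom.mem_range]

lemma EvPer.zadj_mem_iff {α z : ℂ} : z ∈ Zadj α ↔ z ∈ Algebra.adjoin ℤ ({α} : Set ℂ) := by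
  rw [EvPer.zadj_eq]; rfl

lemma EvPer.zadj_zero (α : ℂ) : (0 : ℂ) ∈ Zadj α := ⟨0, by simp⟩

lemma EvPer.zadj_intCast (α : ℂ) (n : ℤ) : (n : ℂ) ∈ Zadj α := ⟨C n, by simp⟩

lemma EvPer.zadj_add {α x y : ℂ} (hx : x ∈ Zadj α) (hy : y ∈ Zadj α) : x + y ∈ Zadj α := by
  rw [EvPer.zadj_mem_iff] at *; exact add_mem hx hy

lemma EvPer.zadj_sub {α x y : ℂ} (hx : x ∈ Zadj α) (hy : y ∈ Zadj α) : x - y ∈ Zadj α := by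
  rw [EvPer.zadj_mem_iff] at *; exact sub_mem hx hy

lemma EvPer.zadj_mul {α x y : ℂ} (hx : x ∈ Zadj α) (hy : y ∈ Zadj α) : x * y ∈ Zadj α := by
  rw [EvPer.zadj_mem_iff] at *; exact mul_mem hx hy

lemma EvPer.zadj_neg {α x : ℂ} (hx : x ∈ Zadj α) : -x ∈ Zadj α := by
  rw [EvPer.zadj_mem_iff] at *; exact neg_mem hx

lemma EvPer.exists_intpoly (α : ℂ) (hα : IsAlgebraic ℚ α) (h0 : α ≠ 0) :
    ∃ q : ℤ[X], aeval α q = 0 ∧ q.coeff 0 ≠ 0 := by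
  obtain ⟨p, hp0, hpα⟩ := hα
  set A : ℤ[X] := IsLocalization.integerNormalization (nonZeroDivisors ℤ) p with hA
  have hAα : aeval α A = 0 :=
    IsLocalization.integerNormalization_aeval_eq_zero (nonZeroDivisors ℤ) p hpα
  have hA0 : A ≠ 0 := by
    intro h
    obtain ⟨b, hb⟩ := IsLocalization.integerNormalization_map_to_map (nonZeroDivisors ℤ) p
    rw [← hA, h, Polynomial.map_zero] at hb
    have hb0 : (b : ℤ) ≠ 0 := nonZeroDivisors.coe_ne_zero b
    have := hb.symm
    rw [smul_eq_zero] at this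
    rcases this with h1 | h2
    · exact hb0 (by exact_mod_cast h1)
    · exact hp0 h2
  obtain ⟨q, hq1, hq2⟩ := A.exists_eq_pow_rootMultiplicity_mul_and_not_dvd hA0 0
  refine ⟨q, ?_, ?_⟩
  · have := hAα
    rw [hq1] at this
    simp only [map_mul, map_pow, map_sub, aeval_X, aeval_C] at this
    rcases mul_eq_zero.mp this with h | h
    · exact absurd h (pow_ne_zero _ (by simpa using h0))
    · exact h
  · have hnd : ¬ (X : ℤ[X]) ∣ q := by simpa using hq2
    intro hc
    exact hnd (X_dvd_iff.mpr hc)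

lemma EvPer.crs_finite {α : ℂ} (hα : IsAlgebraic ℚ α) (h0 : α ≠ 0) {R : Set ℂ}
    (hR : IsCRS α R) : R.Finite := by
  classical
  obtain ⟨q, hq, hq0⟩ := EvPer.exists_intpoly α hα h0
  set M : ℕ := q.coeff 0 |>.natAbs with hM
  have hM0 : M ≠ 0 := by simpa [hM, Int.natAbs_eq_zero] using hq0
  haveI : NeZero M := ⟨hM0⟩
  have ha0 : ((q.coeff 0 : ℤ) : ℂ) = α * (-(aeval α q.divX)) := by
    have h1 : q.divX * X + C (q.coeff 0) = q := Polynomial.divX_mul_X_add q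
    have h2 := congrArg (aeval α) h1
    simp only [map_add, map_mul, aeval_X, aeval_C, hq, algebraMap_int_eq, eq_intCast,
      map_intCast] at h2
    linear_combination h2
  have hdec : ∀ z ∈ Zadj α, ∃ n : ℤ, ∃ γ ∈ Zadj α, z - n = α * γ := by
    intro z hz
    obtain ⟨P, hP⟩ := hz
    refine ⟨P.coeff 0, aeval α P.divX, ⟨P.divX, rfl⟩, ?_⟩
    have h1 : P.divX * X + C (P.coeff 0) = P := Polynomial.divX_mul_X_add P
    have h2 := congrArg (aeval α) h1
    simp only [map_add, map_mul, aeval_X, aeval_C, algebraMap_int_eq, eq_intCast,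
      map_intCast] at h2
    rw [hP] at h2
    linear_combination -h2
  set f : R → ZMod M := fun r => (((hdec r.1 (hR.1 r.2)).choose : ℤ) : ZMod M) with hf
  have hinj : Function.Injective f := by
    rintro ⟨r₁, h₁⟩ ⟨r₂, h₂⟩ hfr
    obtain ⟨γ₁, hγ₁, hd₁⟩ := (hdec r₁ (hR.1 h₁)).choose_spec
    obtain ⟨γ₂, hγ₂, hd₂⟩ := (hdec r₂ (hR.1 h₂)).choose_spec
    set n₁ := (hdec r₁ (hR.1 h₁)).choose
    set n₂ := (hdec r₂ (hR.1 h₂)).choose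
    simp only [hf] at hfr
    have hdvd : (M : ℤ) ∣ n₁ - n₂ := by
      rwa [← ZMod.intCast_zmod_eq_zero_iff_dvd, Int.cast_sub, sub_eq_zero]
    have hdvd' : q.coeff 0 ∣ n₁ - n₂ := by
      rwa [hM, Int.natAbs_dvd] at hdvd
    obtain ⟨k, hk⟩ := hdvd'
    have hγ : r₁ - r₂ = α * (γ₁ - γ₂ + (-(aeval α q.divX)) * (k : ℂ)) := by
      have hkC : ((n₁ : ℂ) - n₂) = α * ((-(aeval α q.divX)) * (k : ℂ)) := by
        have : ((n₁ - n₂ : ℤ) : ℂ) = ((q.coeff 0 * k : ℤ) : ℂ) := by rw [hk]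
        push_cast at this
        rw [this, ha0]
        ring
      push_cast at hkC
      linear_combination hd₁ - hd₂ + hkC
    have hu := hR.2 r₁ (hR.1 h₁)
    have e₁ : r₁ ∈ R ∧ ∃ γ ∈ Zadj α, r₁ - r₁ = α * γ :=
      ⟨h₁, 0, EvPer.zadj_zero α, by ring⟩
    have e₂ : r₂ ∈ R ∧ ∃ γ ∈ Zadj α, r₁ - r₂ = α * γ :=
      ⟨h₂, _, EvPer.zadj_add (EvPer.zadj_sub hγ₁ hγ₂)
        (EvPer.zadj_mul (EvPer.zadj_neg ⟨q.divX, rfl⟩) (EvPer.zadj_intCast α k)), hγ⟩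
    have := hu.unique e₁ e₂
    exact Subtype.ext this
  have : Finite R := Finite.of_injective f hinj
  exact Set.toFinite R

end ZadjLemmas

open IsDedekindDomain NumberField

set_option maxHeartbeats 2000000 in
/-- Corollary 2 (ii): for an expanding algebraic number `α`, a CRS `R` and the associated
map `J`, every orbit `(J^{(n)}(β))_{n≥0}` with `β ∈ ℤ[α]` is eventually periodic. -/
theorem orbits_eventually_periodic (α : ℂ) (hα : IsAlgebraic ℚ α)
    (hexp : ∀ z : ℂ, aeval z (minpoly ℚ α) = 0 → 1 < ‖z‖)
    (R : Set ℂ) (hR : IsCRS α R) (J : ℂ → ℂ) (hJ : IsJmap α R J) :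
    ∀ β ∈ Zadj α, EvPeriodic J β := by
  classical
  intro β hβ
  have hαint : IsIntegral ℚ α := hα.isIntegral
  have hαabs : 1 < ‖α‖ := hexp α (minpoly.aeval ℚ α)
  have hα0 : α ≠ 0 := by
    intro h; rw [h] at hαabs; simp at hαabs; linarith
  -- the number field
  set K := IntermediateField.adjoin ℚ ({α} : Set ℂ) with hKdef
  haveI : FiniteDimensional ℚ K := IntermediateField.adjoin.finiteDimensional hαint
  haveI : NumberField K := ⟨⟩
  have hαmem : α ∈ K := IntermediateField.mem_adjoin_simple_self ℚ α
  set a : K := ⟨α, hαmem⟩ with hadef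
  have hcoe_a : (algebraMap K ℂ) a = α := rfl
  have hane : a ≠ 0 := by
    intro h
    exact hα0 (by rw [← hcoe_a, h, map_zero])
  have hsub : ∀ z ∈ Zadj α, z ∈ K := by
    rintro z ⟨P, rfl⟩
    have : aeval α P = algebraMap K ℂ (aeval a P) := by
      rw [← hcoe_a, aeval_algebraMap_apply]
    rw [this]
    exact (aeval a P).2
  have hlift : ∀ (z : ℂ) (hz : z ∈ Zadj α), ∃ P : ℤ[X], aeval a P = ⟨z, hsub z hz⟩ := by
    rintro z hz
    obtain ⟨P, hP⟩ := hz
    refine ⟨P, Subtype.ext ?_⟩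
    show (algebraMap K ℂ) (aeval a P) = z
    rw [← aeval_algebraMap_apply, hcoe_a, hP]
  have hval : ∀ (z : ℂ) (hz : z ∈ Zadj α) (v : HeightOneSpectrum (𝓞 K)),
      v.valuation K a ≤ 1 → v.valuation K (⟨z, hsub z hz⟩ : K) ≤ 1 := by
    intro z hz v hv
    obtain ⟨P, hP⟩ := hlift z hz
    rw [← hP, aeval_eq_sum_range]
    apply Valuation.map_sum_le
    intro i _
    have h1 : v.valuation K ((P.coeff i : K)) ≤ 1 := by
      have : ((P.coeff i : ℤ) : K) = algebraMap (𝓞 K) K ((P.coeff i : ℤ) : 𝓞 K) := by rfl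
      rw [this]
      exact v.valuation_le_one _
    rw [zsmul_eq_mul, map_mul, map_pow]
    exact mul_le_one' h1 (pow_le_one' hv i)
  have hroot : ∀ φ : K →+* ℂ, 1 < ‖φ a‖ := by
    intro φ
    apply hexp
    have hmp : minpoly ℚ α = minpoly ℚ a := by
      rw [← hcoe_a]
      exact minpoly.algebraMap_eq (algebraMap K ℂ).injective a
    have h := Polynomial.aeval_algHom_apply φ.toRatAlgHom a (minpoly ℚ a)
    rw [minpoly.aeval, map_zero] at h
    rw [hmp]
    exact h
  -- the orbit
  set o : ℕ → ℂ := fun n => J^[n] β with ho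
  have omem : ∀ n, o n ∈ Zadj α := by
    intro n
    induction n with
    | zero => simpa [ho] using hβ
    | succ n ih =>
      show J^[n+1] β ∈ Zadj α
      rw [Function.iterate_succ_apply']
      exact (hJ _ ih).1
  set r : ℕ → ℂ := fun n => ((hJ (o n) (omem n)).2).choose with hrdef
  have hrR : ∀ n, r n ∈ R := fun n => ((hJ (o n) (omem n)).2).choose_spec.1
  have hrel : ∀ n, o n = r n + α * o (n + 1) := by
    intro n
    have h := ((hJ (o n) (omem n)).2).choose_spec.2
    have h2 : o (n+1) = J (o n) := Function.iterate_succ_apply' J n β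
    rw [h2]
    exact h
  -- lifted orbit
  set oK : ℕ → K := fun n => ⟨o n, hsub (o n) (omem n)⟩ with hoK
  set rK : ℕ → K := fun n => ⟨r n, hsub (r n) (hR.1 (hrR n))⟩ with hrK
  have hoKrel : ∀ n, oK n = rK n + a * oK (n + 1) := by
    intro n
    apply Subtype.ext
    push_cast
    exact hrel n
  -- the finite subset of K carrying R and β
  have hRfin : R.Finite := EvPer.crs_finite hα hα0 hR
  set Rset : Set K := {x : K | (x : ℂ) ∈ R} with hRset
  haveI : Finite R := hRfin.to_subtype
  have hRsetfin : Rset.Finite := by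
    have : Function.Injective (fun x : Rset => (⟨(x.1 : ℂ), x.2⟩ : R)) := by
      rintro ⟨x, hx⟩ ⟨y, hy⟩ h
      simp only [Subtype.mk.injEq] at h
      exact Subtype.ext (Subtype.ext h)
    have : Finite Rset := Finite.of_injective _ this
    exact Set.toFinite Rset
  set F₀ : Finset K := insert (oK 0) hRsetfin.toFinset with hF₀
  have hrKF : ∀ n, rK n ∈ F₀ := by
    intro n
    apply Finset.mem_insert_of_mem
    rw [Set.Finite.mem_toFinset]
    exact hrR n
  -- common denominator
  obtain ⟨b, hb⟩ := IsLocalization.exist_integer_multiples (nonZeroDivisors (𝓞 K)) F₀ id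
  set b' : K := algebraMap (𝓞 K) K (b : 𝓞 K) with hb'
  have hb'0 : b' ≠ 0 := by
    simpa [hb'] using nonZeroDivisors.coe_ne_zero b
  have hb1 : ∀ x ∈ F₀, ∃ y : 𝓞 K, algebraMap (𝓞 K) K y = b' * x := by
    intro x hx
    obtain ⟨y, hy⟩ := hb x hx
    exact ⟨y, by rw [hy, Algebra.smul_def]; rfl⟩
  have hval1 : ∀ x ∈ F₀, ∀ v : HeightOneSpectrum (𝓞 K), v.valuation K (b' * x) ≤ 1 := by
    intro x hx v
    obtain ⟨y, hy⟩ := hb1 x hx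
    rw [← hy]
    exact v.valuation_le_one _
  -- denominator invariance along the orbit
  have hinv : ∀ n (v : HeightOneSpectrum (𝓞 K)), v.valuation K (b' * oK n) ≤ 1 := by
    intro n
    induction n with
    | zero => exact fun v => hval1 _ (Finset.mem_insert_self _ _) v
    | succ n ih =>
      intro v
      by_cases hva : v.valuation K a ≤ 1
      · rw [map_mul]
        have h2 : v.valuation K (oK (n+1)) ≤ 1 := hval (o (n+1)) (omem (n+1)) v hva
        have h1 : v.valuation K b' ≤ 1 := v.valuation_le_one _
        exact mul_le_one' h1 h2
      · push_neg at hva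
        have hstep : b' * oK (n + 1) = (b' * oK n - b' * rK n) * a⁻¹ := by
          rw [eq_mul_inv_iff_mul_eq₀ hane]
          linear_combination -b' * (hoKrel n)
        have hinva : (v.valuation K a)⁻¹ ≤ 1 := by
          rw [inv_le_one₀ (zero_lt_one.trans hva)]
          exact le_of_lt hva
        calc v.valuation K (b' * oK (n+1))
            = v.valuation K (b' * oK n - b' * rK n) * (v.valuation K a)⁻¹ := by
              rw [hstep, map_mul, Valuation.map_inv]
          _ ≤ max (v.valuation K (b' * oK n)) (v.valuation K (b' * rK n)) * (v.valuation K a)⁻¹ :=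
              mul_le_mul_left (Valuation.map_sub _ _ _) _
          _ ≤ 1 * 1 := mul_le_mul' (max_le (ih v) (hval1 _ (hrKF n) v)) hinva
          _ = 1 := one_mul 1
  have hint : ∀ n, IsIntegral ℤ (b' * oK n) :=
    fun n => EvPer.integral_of_val_le_one K _ (fun v => hinv n v)
  -- archimedean bounds
  haveI : Nonempty (K →+* ℂ) := inferInstance
  set H : K → ℝ := fun x => Finset.univ.sup' Finset.univ_nonempty
    (fun φ : K →+* ℂ => ‖φ x‖) with hH
  have hHle : ∀ (x : K) (φ : K →+* ℂ), ‖φ x‖ ≤ H x := by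
    intro x φ
    simp only [hH]
    exact Finset.le_sup' (fun ψ : K →+* ℂ => ‖ψ x‖) (Finset.mem_univ φ)
  have hHle' : ∀ (x : K) (c : ℝ), (∀ φ : K →+* ℂ, ‖φ x‖ ≤ c) → H x ≤ c := by
    intro x c h
    simp only [hH]
    exact Finset.sup'_le _ _ (fun φ _ => h φ)
  have hH0 : ∀ x : K, 0 ≤ H x := by
    intro x
    obtain ⟨φ⟩ := ‹Nonempty (K →+* ℂ)›
    exact le_trans (norm_nonneg _) (hHle x φ)
  set lam : ℝ := Finset.univ.inf' Finset.univ_nonempty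
    (fun φ : K →+* ℂ => ‖φ a‖) with hlam
  have hlam1 : 1 < lam := by
    rw [hlam, Finset.lt_inf'_iff]
    exact fun φ _ => hroot φ
  have hlampos : 0 < lam := lt_trans one_pos hlam1
  have hlamle : ∀ φ : K →+* ℂ, lam ≤ ‖φ a‖ := by
    intro φ
    simp only [hlam]
    exact Finset.inf'_le _ (Finset.mem_univ φ)
  set C : ℝ := F₀.sup' (Finset.insert_nonempty _ _) H with hC
  have hCle : ∀ x ∈ F₀, H x ≤ C := by
    intro x hx
    simp only [hC]
    exact Finset.le_sup' _ hx
  have hC0 : 0 ≤ C := le_trans (hH0 _) (hCle _ (Finset.mem_insert_self _ _))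
  -- per-embedding recursion
  have hphirel : ∀ (φ : K →+* ℂ) n, φ (oK (n+1)) = (φ (oK n) - φ (rK n)) * (φ a)⁻¹ := by
    intro φ n
    have hphia : φ a ≠ 0 := by
      intro h
      have := hroot φ
      rw [h] at this
      simp at this
      linarith
    field_simp
    have := congrArg φ (hoKrel n)
    rw [map_add, map_mul] at this
    linear_combination -this
  have hrec : ∀ n, H (oK (n+1)) ≤ (H (oK n) + C) / lam := by
    intro n
    apply hHle'
    intro φ
    rw [hphirel φ n, norm_mul, norm_inv, ← div_eq_mul_inv]
    have tri : ‖φ (oK n) - φ (rK n)‖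
        ≤ ‖φ (oK n)‖ + ‖φ (rK n)‖ := by
      have := norm_sub_le (φ (oK n)) (φ (rK n))
      simpa using this
    refine div_le_div₀ (by linarith [hH0 (oK n), hC0]) ?_ hlampos (hlamle φ)
    exact le_trans tri (add_le_add (hHle _ φ) (le_trans (hHle _ φ) (hCle _ (hrKF n))))
  -- the descending bound
  set B : ℝ := C / (lam - 1) + 1 with hB
  have hlm1 : 0 < lam - 1 := by linarith
  have hkey : B * (lam - 1) = C + (lam - 1) := by
    rw [hB]
    field_simp
  have hB0 : 0 < B := by
    have := div_nonneg hC0 (le_of_lt hlm1)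
    rw [hB]
    linarith
  set d : ℝ := (lam - 1) / lam with hd
  have hd0 : 0 < d := by positivity
  have hdesc : ∀ n, H (oK n) ≤ max B (H (oK 0) - n * d) := by
    intro n
    induction n with
    | zero => simpa using le_max_right _ _
    | succ n ih =>
      by_cases hc : H (oK n) ≤ B
      · refine le_trans (hrec n) (le_trans ?_ (le_max_left _ _))
        rw [div_le_iff₀ hlampos]
        nlinarith
      · push_neg at hc
        have h1 : H (oK n) ≤ H (oK 0) - n * d := by
          rcases le_max_iff.mp ih with h | h
          · linarith
          · exact h
        have h2 : (H (oK n) + C) / lam ≤ H (oK n) - d := by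
          rw [div_le_iff₀ hlampos]
          have hdl : d * lam = lam - 1 := by
            rw [hd]; field_simp
          nlinarith
        refine le_trans (hrec n) (le_trans (le_trans h2 ?_) (le_max_right _ _))
        push_cast
        linarith
  obtain ⟨N, hN⟩ := exists_nat_ge ((H (oK 0) - B) / d)
  have hfinal : ∀ n, N ≤ n → H (oK n) ≤ B := by
    intro n hn
    refine le_trans (hdesc n) (max_le le_rfl ?_)
    have h1 : (H (oK 0) - B) / d ≤ (n : ℝ) := le_trans hN (by exact_mod_cast hn)
    rw [div_le_iff₀ hd0] at h1
    nlinarith [mul_le_mul_of_nonneg_right (show (N:ℝ) ≤ n by exact_mod_cast hn) (le_of_lt hd0)]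
  -- finiteness
  set T : Set K := {x : K | IsIntegral ℤ (b' * x) ∧ ∀ φ : K →+* ℂ, ‖φ x‖ ≤ B}
    with hT
  have hTfin : T.Finite := by
    have hT' := NumberField.Embeddings.finite_of_norm_le K ℂ (H b' * B)
    have hsubT : T ⊆ (fun x : K => b' * x) ⁻¹' {x : K | IsIntegral ℤ x ∧
        ∀ φ : K →+* ℂ, ‖φ x‖ ≤ H b' * B} := by
      rintro x ⟨h1, h2⟩
      simp only [Set.mem_preimage, Set.mem_setOf_eq]
      refine ⟨h1, fun φ => ?_⟩
      rw [map_mul, norm_mul]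
      exact mul_le_mul (hHle b' φ) (h2 φ) (norm_nonneg _) (hH0 b')
    exact Set.Finite.subset (hT'.preimage ((mul_right_injective₀ hb'0).injOn)) hsubT
  have hmemT : ∀ n, N ≤ n → oK n ∈ T := by
    intro n hn
    exact ⟨hint n, fun φ => le_trans (hHle _ φ) (hfinal n hn)⟩
  -- pigeonhole
  haveI : Finite T := hTfin.to_subtype
  obtain ⟨i, j, hij, hEq⟩ := Finite.exists_ne_map_eq_of_infinite
    (fun i : ℕ => (⟨oK (N + i), hmemT _ (Nat.le_add_right _ _)⟩ : T))
  have hoEq : o (N + i) = o (N + j) := by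
    have := congrArg (fun x : T => ((x : K) : ℂ)) hEq
    exact this
  rcases hij.lt_or_gt with h | h
  · refine ⟨N + i, j - i, by omega, ?_⟩
    have e : N + i + (j - i) = N + j := by omega
    rw [e]
    exact hoEq.symm
  · refine ⟨N + j, i - j, by omega, ?_⟩
    have e : N + j + (i - j) = N + i := by omega
    rw [e]
    exact hoEq
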